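/- There exists a copyless CRA over the max-plus semiring (ℕ ∪ {−∞}, max, +, −∞, 0) and the alphabet Σ = {a, b, #}, with three registers, that computes the function f_2 defined as follows: for a word w ∈ Σ* written as w = w_0 # w_1 # … # w_k with each w_i ∈ {a,b}*, f_2(w) = Σ_{i=0}^{k} max( |w_i|_a , |w_i|_b ), where |w_i|_a and |w_i|_b denote the number of a's and b's in w_i respectively. -/

import Mathlib

/-! ### Expressions over a semiring with variables -/

/-- Syntax trees of expressions over a semiring `S` with variables in `X`,
built from constants, variables, and the two semiring operations. -/
inductive Expr (S X : Type) : Type where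
  | const : S → Expr S X
  | var : X → Expr S X
  | add : Expr S X → Expr S X → Expr S X
  | mul : Expr S X → Expr S X → Expr S X

namespace Expr

variable {S X Y : Type}

/-- Evaluation of an expression under a valuation `ν : X → S`. -/
def eval [Add S] [Mul S] (ν : X → S) : Expr S X → S
  | const c => c
  | var x => ν x
  | add e₁ e₂ => e₁.eval ν + e₂.eval ν
  | mul e₁ e₂ => e₁.eval ν * e₂.eval ν

/-- Number of occurrences of the variable `x` in an expression. -/
def varCount [DecidableEq X] (x : X) : Expr S X → ℕ
  | const _ => 0
  | var y => if y = x then 1 else 0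
  | add e₁ e₂ => e₁.varCount x + e₂.varCount x
  | mul e₁ e₂ => e₁.varCount x + e₂.varCount x

/-- The set `Var(e)` of variables occurring in an expression. -/
def vars [DecidableEq X] : Expr S X → Finset X
  | const _ => ∅
  | var x => {x}
  | add e₁ e₂ => e₁.vars ∪ e₂.vars
  | mul e₁ e₂ => e₁.vars ∪ e₂.vars

/-- An expression is copyless if every variable occurs at most once in it. -/
def Copyless [DecidableEq X] (e : Expr S X) : Prop :=
  ∀ x : X, e.varCount x ≤ 1

/-- Substituting an expression `σ x` for each variable `x`. -/
def subst (σ : X → Expr S Y) : Expr S X → Expr S Y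
  | const c => const c
  | var x => σ x
  | add e₁ e₂ => add (e₁.subst σ) (e₂.subst σ)
  | mul e₁ e₂ => mul (e₁.subst σ) (e₂.subst σ)

/-- An expression never mentions the constant `0`. -/
def ZeroFree [Zero S] : Expr S X → Prop
  | const c => c ≠ (0 : S)
  | var _ => True
  | add e₁ e₂ => e₁.ZeroFree ∧ e₂.ZeroFree
  | mul e₁ e₂ => e₁.ZeroFree ∧ e₂.ZeroFree

/-- Number of constants mentioned in an expression. -/
def constCount : Expr S X → ℕ
  | const _ => 1
  | var _ => 0
  | add e₁ e₂ => e₁.constCount + e₂.constCount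
  | mul e₁ e₂ => e₁.constCount + e₂.constCount

/-- The top node of the expression is a `⊕`-node. -/
def isAddNode : Expr S X → Bool
  | add _ _ => true
  | _ => false

/-- The top node of the expression is a `⊙`-node. -/
def isMulNode : Expr S X → Bool
  | mul _ _ => true
  | _ => false

/-- The alternation `Alt(e)` of an expression: the maximal number of shifts
between `⊕` and `⊙` along branches of the parse tree. -/
def alt : Expr S X → ℕ
  | const _ => 0
  | var _ => 0
  | add e₁ e₂ =>
      max (e₁.alt + (if e₁.isMulNode then 1 else 0))
          (e₂.alt + (if e₂.isMulNode then 1 else 0)) + 1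
  | mul e₁ e₂ =>
      max (e₁.alt + (if e₁.isAddNode then 1 else 0))
          (e₂.alt + (if e₂.isAddNode then 1 else 0)) + 1

end Expr

/-! ### Substitutions -/

namespace Subs

variable {S X : Type}

/-- A substitution is copyless if each `σ x` is a copyless expression and
distinct registers use disjoint sets of variables. -/
def Copyless [DecidableEq X] (σ : X → Expr S X) : Prop :=
  (∀ x : X, (σ x).Copyless) ∧
    ∀ x y : X, x ≠ y → Disjoint ((σ x).vars) ((σ y).vars)

/-- Composition `σ ∘ τ` of substitutions: `(σ ∘ τ)(x) = σ̂(τ(x))`. -/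
def comp (σ τ : X → Expr S X) : X → Expr S X :=
  fun x => (τ x).subst σ

/-- The identity substitution. -/
def idS : X → Expr S X := fun x => Expr.var x

/-- `σ^n`, the `n`-fold composition of `σ` with itself. -/
def iterate (σ : X → Expr S X) : ℕ → (X → Expr S X)
  | 0 => idS
  | n + 1 => comp σ (iterate σ n)

/-- A substitution is in normal form w.r.t. the order on `X` if every variable
mentioned in `σ x` is at least `x`. -/
def NormalForm [DecidableEq X] [LE X] (σ : X → Expr S X) : Prop :=
  ∀ x y : X, y ∈ (σ x).vars → x ≤ y

/-- The register `x` is `σ`-stable, i.e. `x ∈ Var(σ x)`. -/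
def Stable [DecidableEq X] (σ : X → Expr S X) (x : X) : Prop :=
  x ∈ (σ x).vars

/-- A substitution is collapsing if every non-`σ`-stable register is mapped
to a variable-free (ground) expression. -/
def Collapsing [DecidableEq X] (σ : X → Expr S X) : Prop :=
  ∀ y : X, ¬ Stable σ y → (σ y).vars = ∅

end Subs

/-! ### Cost register automata -/

/-- A cost register automaton over semiring `S`, alphabet `A` and registers `X`. -/
structure CRA (S A X : Type) where
  Q : Type
  [finQ : Fintype Q]
  δ : Q → A → Q × (X → Expr S X)
  q0 : Q
  ν0 : X → S
  μ : Q → Expr S X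

attribute [instance] CRA.finQ

namespace CRA

variable {S A X : Type}

/-- One step of the run of a CRA on a letter. -/
def step [Add S] [Mul S] (M : CRA S A X) (c : M.Q × (X → S)) (a : A) : M.Q × (X → S) :=
  ((M.δ c.1 a).1, fun x => ((M.δ c.1 a).2 x).eval c.2)

/-- The configuration reached by the (unique) run of a CRA on a word. -/
def run [Add S] [Mul S] (M : CRA S A X) (w : List A) : M.Q × (X → S) :=
  w.foldl M.step (M.q0, M.ν0)

/-- The output `⟦M⟧(w)` of the CRA on the word `w`. -/
def output [Add S] [Mul S] (M : CRA S A X) (w : List A) : S :=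
  (M.μ (M.run w).1).eval (M.run w).2

/-- A CRA is copyless if all its transition substitutions and all its output
expressions are copyless. -/
def CopylessCRA [DecidableEq X] (M : CRA S A X) : Prop :=
  (∀ (q : M.Q) (a : A), Subs.Copyless (M.δ q a).2) ∧
    ∀ q : M.Q, (M.μ q).Copyless

/-- The transitive closure `δ*` of the transition function, composing the
substitutions along the word. -/
def deltaStar (M : CRA S A X) (q : M.Q) : List A → M.Q × (X → Expr S X)
  | [] => (q, Subs.idS)
  | a :: w =>
      ((M.deltaStar (M.δ q a).1 w).1,
        Subs.comp (M.δ q a).2 ((M.deltaStar (M.δ q a).1 w).2))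

/-- A CRA is in normal form if all its transition substitutions are. -/
def NormalFormCRA [DecidableEq X] [LE X] (M : CRA S A X) : Prop :=
  ∀ (q : M.Q) (a : A), Subs.NormalForm (M.δ q a).2

/-- A register is stable in `M` if it is stable on every substitution occurring
in `δ*`. -/
def StableIn [DecidableEq X] (M : CRA S A X) (x : X) : Prop :=
  ∀ (q : M.Q) (w : List A), Subs.Stable (M.deltaStar q w).2 x

/-- Every state of `M` is reachable from every state. -/
def StronglyConnected (M : CRA S A X) : Prop :=
  ∀ q q' : M.Q, ∃ w : List A, (M.deltaStar q w).1 = q'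

/-- The ground expression `ν0 ∘ σ1 ∘ … ∘ σn ∘ μ(qn)` arising from the run on `w`. -/
def groundExpr (M : CRA S A X) (w : List A) : Expr S X :=
  ((M.μ (M.deltaStar M.q0 w).1).subst ((M.deltaStar M.q0 w).2)).subst
    (fun x => Expr.const (M.ν0 x))

/-- The CRA has bounded alternation: the alternation of all ground output
expressions is uniformly bounded. -/
def BoundedAlt (M : CRA S A X) : Prop :=
  ∃ N : ℕ, ∀ w : List A, (M.groundExpr w).alt ≤ N

end CRA
/-! ### The max-plus semiring `(ℕ ∪ {−∞}, max, +, −∞, 0)` -/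

/-- The carrier `ℕ ∪ {−∞}` of the max-plus semiring. -/
inductive MaxPlus : Type where
  | neginf : MaxPlus
  | nat : ℕ → MaxPlus
  deriving DecidableEq

namespace MaxPlus

/-- Semiring addition: `max`, with `−∞` neutral. -/
def addFn : MaxPlus → MaxPlus → MaxPlus
  | neginf, y => y
  | x, neginf => x
  | nat m, nat n => nat (max m n)

/-- Semiring multiplication: `+`, with `−∞` absorbing. -/
def mulFn : MaxPlus → MaxPlus → MaxPlus
  | neginf, _ => neginf
  | _, neginf => neginf
  | nat m, nat n => nat (m + n)

instance : Add MaxPlus := ⟨addFn⟩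
instance : Mul MaxPlus := ⟨mulFn⟩
instance : Zero MaxPlus := ⟨neginf⟩
instance : One MaxPlus := ⟨nat 0⟩

end MaxPlus

/-! ### The alphabet `Σ = {a, b, #}` -/

inductive ABH : Type where
  | a : ABH
  | b : ABH
  | hash : ABH
  deriving DecidableEq

instance : Fintype ABH := ⟨{ABH.a, ABH.b, ABH.hash}, fun x => by cases x <;> simp⟩

/-- The function `f_2`: for `w = w_0 # w_1 # … # w_k` with `w_i ∈ {a,b}*`,
`f_2(w) = Σ_{i=0}^{k} max(|w_i|_a, |w_i|_b)`. -/
def f2 (w : List ABH) : MaxPlus :=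
  MaxPlus.nat (((w.splitOn ABH.hash).map fun u => max (u.count ABH.a) (u.count ABH.b)).sum)

/-! ### STATEMENT 19
There is a copyless CRA over the max-plus semiring and `Σ = {a, b, #}` with
three registers that computes `f_2`. -/
section scratch
open Expr

def σa : ABH → (Fin 3 → Expr MaxPlus (Fin 3))
  | .a => ![.var 0, .mul (.var 1) (.const (.nat 1)), .var 2]
  | .b => ![.var 0, .var 1, .mul (.var 2) (.const (.nat 1))]
  | .hash => ![.mul (.var 0) (.add (.var 1) (.var 2)), .const (.nat 0), .const (.nat 0)]

def M2 : CRA MaxPlus ABH (Fin 3) where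
  Q := Unit
  δ := fun _ c => ((), σa c)
  q0 := ()
  ν0 := fun _ => .nat 0
  μ := fun _ => .mul (.var 0) (.add (.var 1) (.var 2))

def νv (S A B : ℕ) : Fin 3 → MaxPlus := ![.nat S, .nat A, .nat B]

def nstep : ℕ × ℕ × ℕ → ABH → ℕ × ℕ × ℕ
  | (S, A, B), .a => (S, A + 1, B)
  | (S, A, B), .b => (S, A, B + 1)
  | (S, A, B), .hash => (S + max A B, 0, 0)

lemma step_eq (S A B : ℕ) (c : ABH) :
    M2.step (((), νv S A B) : M2.Q × (Fin 3 → MaxPlus)) c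
      = ((), νv (nstep (S, A, B) c).1 (nstep (S, A, B) c).2.1 (nstep (S, A, B) c).2.2) := by
  cases c <;>
  · refine Prod.ext rfl (funext fun x => ?_)
    fin_cases x <;> rfl

lemma run_eq (w : List ABH) : ∀ S A B : ℕ,
    List.foldl M2.step (((), νv S A B) : M2.Q × (Fin 3 → MaxPlus)) w
      = ((), νv (w.foldl nstep (S, A, B)).1 (w.foldl nstep (S, A, B)).2.1
          (w.foldl nstep (S, A, B)).2.2) := by
  induction w with
  | nil => intro S A B; rfl
  | cons c w ih =>
    intro S A B
    rw [List.foldl_cons, step_eq]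
    exact ih _ _ _

def g (u : List ABH) : ℕ := max (u.count ABH.a) (u.count ABH.b)

def bsum (A B : ℕ) : List (List ABH) → ℕ
  | [] => max A B
  | u :: us => max (A + u.count ABH.a) (B + u.count ABH.b) + (us.map g).sum

lemma key (w : List ABH) : ∀ S A B : ℕ,
    (w.foldl nstep (S, A, B)).1
      + max (w.foldl nstep (S, A, B)).2.1 (w.foldl nstep (S, A, B)).2.2
      = S + bsum A B (w.splitOn ABH.hash) := by
  induction w with
  | nil => intro S A B; simp [bsum]
  | cons c w ih =>
    intro S A B
    have hne := List.splitOnP_ne_nil (· == ABH.hash) w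
    rcases hu : w.splitOnP (· == ABH.hash) with _ | ⟨u, us⟩
    · exact absurd hu hne
    cases c
    · have h1 : List.foldl nstep (S, A, B) (ABH.a :: w) = List.foldl nstep (S, A+1, B) w := rfl
      rw [h1, ih S (A+1) B]
      simp only [List.splitOn, List.splitOnP_cons, hu]
      simp [bsum, Nat.add_assoc, Nat.add_comm, List.count_cons]
      omega
    · have h1 : List.foldl nstep (S, A, B) (ABH.b :: w) = List.foldl nstep (S, A, B+1) w := rfl
      rw [h1, ih S A (B+1)]
      simp only [List.splitOn, List.splitOnP_cons, hu]
      simp [bsum, List.count_cons]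
      omega
    · have h1 : List.foldl nstep (S, A, B) (ABH.hash :: w) = List.foldl nstep (S + max A B, 0, 0) w := rfl
      rw [h1, ih (S + max A B) 0 0]
      simp only [List.splitOn, List.splitOnP_cons, hu]
      simp [bsum, g]
      omega

theorem exists_copyless_CRA_computing_f2' :
    ∃ M : CRA MaxPlus ABH (Fin 3),
      M.CopylessCRA ∧ ∀ w : List ABH, M.output w = f2 w := by
  refine ⟨M2, ⟨?_, ?_⟩, ?_⟩
  · intro q c
    cases q
    cases c <;>
      exact ⟨fun x => by intro y; fin_cases x <;> fin_cases y <;> decide, by decide⟩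
  · intro q; cases q; intro x; fin_cases x <;> decide
  · intro w
    have h0 : (M2.ν0 : Fin 3 → MaxPlus) = νv 0 0 0 := by
      funext x; fin_cases x <;> rfl
    have hrun : M2.run w = ((), νv (w.foldl nstep (0,0,0)).1 (w.foldl nstep (0,0,0)).2.1
        (w.foldl nstep (0,0,0)).2.2) := by
      show List.foldl M2.step ((), M2.ν0) w = _
      rw [h0, run_eq]
    have hkey := key w 0 0 0
    have hne := List.splitOnP_ne_nil (· == ABH.hash) w
    rcases hu : w.splitOnP (· == ABH.hash) with _ | ⟨u, us⟩
    · exact absurd hu hne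
    show (M2.μ (M2.run w).1).eval (M2.run w).2 = _
    rw [hrun]
    have : (M2.μ ()).eval (νv (w.foldl nstep (0,0,0)).1 (w.foldl nstep (0,0,0)).2.1
        (w.foldl nstep (0,0,0)).2.2)
        = MaxPlus.nat ((w.foldl nstep (0,0,0)).1
            + max (w.foldl nstep (0,0,0)).2.1 (w.foldl nstep (0,0,0)).2.2) := rfl
    rw [this, hkey]
    simp only [List.splitOn] at *
    rw [hu]
    simp only [f2, bsum, g, List.splitOn, hu, List.map_cons, List.sum_cons, Nat.zero_add]
    rfl

end scratch

theorem exists_copyless_CRA_computing_f2 :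
    ∃ M : CRA MaxPlus ABH (Fin 3),
      M.CopylessCRA ∧ ∀ w : List ABH, M.output w = f2 w :=
  exists_copyless_CRA_computing_f2'
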